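/- Let n be odd and let C₁ and C₂ be a pair of odd-like binary duadic codes of length n given by a splitting (S₁, S₂, μ), with common minimum odd weight d₀. Then d₀² ≥ n. -/

import Mathlib

/-- The binary cyclic code of length `n` consisting of all words whose associated
polynomial vanishes at `β ^ j` for every `j` in the defining set `T`. -/
def cyclicCode (n : ℕ) (K : Type*) [Field K] [Algebra (ZMod 2) K] (β : K)
    (T : Finset ℕ) : Set (Fin n → ZMod 2) :=
  {c | ∀ j ∈ T, ∑ i : Fin n, algebraMap (ZMod 2) K (c i) * β ^ (i.val * j) = 0}

/-- The Hamming weight of a binary word. -/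
def wt {n : ℕ} (c : Fin n → ZMod 2) : ℕ :=
  (Finset.univ.filter fun i => c i ≠ 0).card


noncomputable def Fv {n : ℕ} (K : Type*) [Field K] [Algebra (ZMod 2) K]
    (c : Fin n → ZMod 2) (ζ : K) : K :=
  ∑ i : Fin n, algebraMap (ZMod 2) K (c i) * ζ ^ (i : ℕ)

lemma pow_nat_mod' {K : Type*} [Monoid K] {ζ : K} {n : ℕ} (h : ζ ^ n = 1) (x : ℕ) :
    ζ ^ x = ζ ^ (x % n) := by
  conv_lhs => rw [← Nat.div_add_mod x n]
  rw [pow_add, pow_mul, h, one_pow, one_mul]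

lemma geom' {K : Type*} [Field K] {β : K} {n : ℕ} (hβ : IsPrimitiveRoot β n)
    (t : ℕ) : ∑ j : Fin n, (β ^ t) ^ (j : ℕ) = if n ∣ t then (n : K) else 0 := by
  rw [Fin.sum_univ_eq_sum_range]
  split_ifs with h
  · have : β ^ t = 1 := (hβ.pow_eq_one_iff_dvd t).mpr h
    simp [this]
  · have h1 : β ^ t ≠ 1 := fun hc => h ((hβ.pow_eq_one_iff_dvd t).mp hc)
    have h2 : (β ^ t) ^ n = 1 := by
      rw [← pow_mul, mul_comm, pow_mul, hβ.pow_eq_one, one_pow]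
    rw [geom_sum_eq h1, h2, sub_self, zero_div]

lemma sum_eq_wt {n : ℕ} (c : Fin n → ZMod 2) : ∑ i, c i = (wt c : ZMod 2) := by
  unfold wt
  rw [← Finset.sum_filter_ne_zero Finset.univ]
  have hone : ∀ i ∈ Finset.univ.filter (fun i => c i ≠ 0), c i = 1 := by
    intro i hi
    have h : c i ≠ 0 := (Finset.mem_filter.mp hi).2
    revert h; generalize c i = x; revert x; decide
  rw [Finset.sum_congr rfl hone, Finset.sum_const, nsmul_eq_mul, mul_one]

lemma Fv_one {n : ℕ} (K : Type*) [Field K] [Algebra (ZMod 2) K]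
    (c : Fin n → ZMod 2) : Fv K c 1 = algebraMap (ZMod 2) K ((wt c : ZMod 2)) := by
  unfold Fv
  simp only [one_pow, mul_one]
  rw [← map_sum, sum_eq_wt]

lemma Fv_conv {n : ℕ} [NeZero n] (K : Type*) [Field K] [Algebra (ZMod 2) K]
    {ζ : K} (hζ : ζ ^ n = 1) (a b : Fin n → ZMod 2) :
    Fv K (fun k => ∑ i : Fin n, a i * b (k - i)) ζ = Fv K a ζ * Fv K b ζ := by
  unfold Fv
  rw [Finset.sum_mul_sum]
  simp_rw [map_sum, Finset.sum_mul]
  rw [Finset.sum_comm]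
  refine Finset.sum_congr rfl fun i _ => ?_
  rw [← Equiv.sum_comp (Equiv.addLeft i)]
  refine Finset.sum_congr rfl fun m _ => ?_
  have h1 : (Equiv.addLeft i) m - i = m := by
    simp [Equiv.addLeft, add_sub_cancel_left]
  have h2 : ζ ^ (((Equiv.addLeft i) m : Fin n) : ℕ) = ζ ^ (i : ℕ) * ζ ^ (m : ℕ) := by
    have : ((i + m : Fin n) : ℕ) = ((i : ℕ) + (m : ℕ)) % n := Fin.val_add i m
    simp only [Equiv.coe_addLeft]
    rw [this, ← pow_nat_mod' hζ, pow_add]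
  simp only [Equiv.coe_addLeft] at h1 h2 ⊢
  rw [h1, h2, map_mul]
  ring

lemma interp' {n : ℕ} [NeZero n] {K : Type*} [Field K] [Algebra (ZMod 2) K]
    {β : K} (hβ : IsPrimitiveRoot β n) (hnK : (n : K) = 1) (v : Fin n → ZMod 2)
    (H : ∀ j : Fin n, j ≠ 0 → Fv K v (β ^ (j : ℕ)) = 0) (m : Fin n) :
    algebraMap (ZMod 2) K (v m) = Fv K v 1 := by
  have hb1 : β ^ n = 1 := hβ.pow_eq_one
  have key : ∑ j : Fin n, Fv K v (β ^ (j : ℕ)) * (β ^ (n - (m : ℕ))) ^ (j : ℕ)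
      = algebraMap (ZMod 2) K (v m) := by
    unfold Fv
    simp_rw [Finset.sum_mul]
    rw [Finset.sum_comm]
    have step : ∀ k : Fin n, ∑ j : Fin n,
        algebraMap (ZMod 2) K (v k) * (β ^ (j : ℕ)) ^ (k : ℕ) * (β ^ (n - (m : ℕ))) ^ (j : ℕ)
        = algebraMap (ZMod 2) K (v k) * (if n ∣ ((k : ℕ) + (n - (m : ℕ))) then (n : K) else 0) := by
      intro k
      simp_rw [mul_assoc]
      rw [← Finset.mul_sum]
      congr 1
      rw [← geom' hβ ((k : ℕ) + (n - (m : ℕ)))]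
      refine Finset.sum_congr rfl fun j _ => ?_
      rw [← pow_mul, ← pow_mul, ← pow_add, ← pow_mul]
      congr 1
      ring
    simp_rw [step]
    rw [Finset.sum_eq_single m]
    · have : n ∣ ((m : ℕ) + (n - (m : ℕ))) := by
        have := m.isLt; rw [Nat.add_sub_cancel' (le_of_lt this)]
      rw [if_pos this, hnK, mul_one]
    · intro k _ hk
      have hdvd : ¬ n ∣ ((k : ℕ) + (n - (m : ℕ))) := by
        intro hd
        have h1 := m.isLt; have h2 := k.isLt
        have : (k : ℕ) + (n - (m : ℕ)) = n := by
          rcases hd with ⟨c, hc⟩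
          have hc2 : c < 2 := by
            refine Nat.lt_of_mul_lt_mul_left (a := n) ?_
            omega
          have hc1 : 0 < c := by
            rcases Nat.eq_zero_or_pos c with h | h
            · subst h; omega
            · exact h
          have hceq : c = 1 := by omega
          subst hceq
          omega
        have : (k : ℕ) = (m : ℕ) := by omega
        exact hk (Fin.ext this)
      rw [if_neg hdvd, mul_zero]
    · simp
  rw [← key]
  rw [Finset.sum_eq_single 0]
  · simp
  · intro j _ hj
    rw [H j hj, zero_mul]
  · simp

lemma nat_mod_mul_left {n : ℕ} (x y : ℕ) : (x * (y % n)) % n = (x * y) % n := by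
  conv_rhs => rw [Nat.mul_mod]
  rw [Nat.mul_mod, Nat.mod_mod_of_dvd _ (dvd_refl n)]

theorem square_root_bound (n : ℕ) (hn : Odd n) (hn1 : 1 < n)
    (K : Type*) [Field K] [Algebra (ZMod 2) K] (β : K) (hβ : IsPrimitiveRoot β n)
    (S₁ S₂ : Finset ℕ) (μ : ℕ) (hμ : Nat.Coprime μ n)
    (hsub₁ : ∀ j ∈ S₁, 1 ≤ j ∧ j ≤ n - 1) (hsub₂ : ∀ j ∈ S₂, 1 ≤ j ∧ j ≤ n - 1)
    (hdisj : Disjoint S₁ S₂)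
    (hunion : ∀ j : ℕ, 1 ≤ j → j ≤ n - 1 → j ∈ S₁ ∨ j ∈ S₂)
    (hclosed₁ : ∀ j ∈ S₁, 2 * j % n ∈ S₁) (hclosed₂ : ∀ j ∈ S₂, 2 * j % n ∈ S₂)
    (hμ₁ : S₁.image (fun j => μ * j % n) = S₂)
    (hμ₂ : S₂.image (fun j => μ * j % n) = S₁)
    (d₀ : ℕ)
    (hex₁ : ∃ c ∈ cyclicCode n K β S₁, Odd (wt c) ∧ wt c = d₀)
    (hex₂ : ∃ c ∈ cyclicCode n K β S₂, Odd (wt c) ∧ wt c = d₀)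
    (hmin₁ : ∀ c ∈ cyclicCode n K β S₁, Odd (wt c) → d₀ ≤ wt c)
    (hmin₂ : ∀ c ∈ cyclicCode n K β S₂, Odd (wt c) → d₀ ≤ wt c) :
    n ≤ d₀ ^ 2 := by
  haveI : NeZero n := ⟨by omega⟩
  have npos : 0 < n := by omega
  obtain ⟨a, ha, haodd, had⟩ := hex₁
  have hb1 : β ^ n = 1 := hβ.pow_eq_one
  have h2K : ((2 : ℕ) : K) = 0 := by
    rw [← map_natCast (algebraMap (ZMod 2) K) 2,
      show ((2 : ℕ) : ZMod 2) = 0 from rfl, map_zero]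
  have hnK : (n : K) = 1 := by
    obtain ⟨k, hk⟩ := hn
    subst hk
    push_cast
    push_cast at h2K
    rw [h2K]; ring
  have hFa : ∀ j ∈ S₁, Fv K a (β ^ j) = 0 := by
    intro j hj
    have hthis := ha j hj
    unfold Fv
    simp only [← pow_mul]
    simpa [mul_comm] using hthis
  obtain ⟨ν, -, hν⟩ := Nat.exists_mul_mod_eq_one_of_coprime hμ hn1
  set σ : Fin n ≃ Fin n := {
    toFun := fun i => ⟨μ * i % n, Nat.mod_lt _ npos⟩
    invFun := fun i => ⟨ν * i % n, Nat.mod_lt _ npos⟩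
    left_inv := by
      intro i
      ext
      simp only
      rw [nat_mod_mul_left, ← mul_assoc, Nat.mul_mod, Nat.mod_eq_of_lt i.isLt,
        mul_comm ν μ, hν, one_mul, Nat.mod_eq_of_lt i.isLt]
    right_inv := by
      intro i
      ext
      simp only
      rw [nat_mod_mul_left, ← mul_assoc, Nat.mul_mod, Nat.mod_eq_of_lt i.isLt,
        hν, one_mul, Nat.mod_eq_of_lt i.isLt] } with hσ
  set b : Fin n → ZMod 2 := fun k => a (σ.symm k) with hbdef
  have hFb : ∀ j : ℕ, Fv K b (β ^ j) = Fv K a (β ^ (μ * j % n)) := by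
    intro j
    unfold Fv
    rw [← Equiv.sum_comp σ (fun k => algebraMap (ZMod 2) K (b k) * (β ^ j) ^ (k : ℕ))]
    refine Finset.sum_congr rfl fun i _ => ?_
    have h1 : b (σ i) = a i := by rw [hbdef]; simp
    rw [h1]
    congr 1
    have h2 : ((σ i : Fin n) : ℕ) = μ * (i : ℕ) % n := rfl
    rw [h2, ← pow_mul, ← pow_mul,
      pow_nat_mod' hb1 (j * (μ * (i : ℕ) % n)), pow_nat_mod' hb1 ((μ * j % n) * (i : ℕ)),
      nat_mod_mul_left, mul_comm (μ * j % n) (i : ℕ), nat_mod_mul_left]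
    congr 1
    ring_nf
  have hbS : ∀ j ∈ S₂, Fv K b (β ^ j) = 0 := by
    intro j hj
    rw [hFb]
    exact hFa _ (by rw [← hμ₂]; exact Finset.mem_image_of_mem _ hj)
  set c : Fin n → ZMod 2 := fun k => ∑ i : Fin n, a i * b (k - i) with hcdef
  have hc0 : ∀ j : Fin n, j ≠ 0 → Fv K c (β ^ (j : ℕ)) = 0 := by
    intro j hj
    have hζ : (β ^ (j : ℕ)) ^ n = 1 := by
      rw [← pow_mul, mul_comm, pow_mul, hb1, one_pow]
    rw [hcdef, Fv_conv K hζ a b]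
    have h1 : 1 ≤ (j : ℕ) := Nat.one_le_iff_ne_zero.mpr (fun h => hj (Fin.ext h))
    have h2 : (j : ℕ) ≤ n - 1 := by have := j.isLt; omega
    rcases hunion _ h1 h2 with h | h
    · rw [hFa _ h, zero_mul]
    · rw [hbS _ h, mul_zero]
  have hwtb : wt b = wt a := by
    unfold wt
    refine Finset.card_equiv σ.symm ?_
    intro i
    simp [hbdef]
  have hodd1 : (wt a : ZMod 2) = 1 := by
    rw [← ZMod.natCast_mod, Nat.odd_iff.mp haodd, Nat.cast_one]
  have ha1 : Fv K a 1 = 1 := by rw [Fv_one, hodd1, map_one]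
  have hb1' : Fv K b 1 = 1 := by rw [Fv_one, hwtb, hodd1, map_one]
  have hcall : ∀ m : Fin n, c m = 1 := by
    intro m
    have hint := interp' hβ hnK c hc0 m
    rw [hcdef, Fv_conv K (one_pow n) a b, ha1, hb1', mul_one] at hint
    have := (algebraMap (ZMod 2) K).injective
    apply this
    rw [map_one]
    exact hint
  have hterm : ∀ k : Fin n, ∃ i : Fin n, a i ≠ 0 ∧ b (k - i) ≠ 0 := by
    intro k
    have hne : (∑ i : Fin n, a i * b (k - i)) ≠ 0 := by
      have h1 : (∑ i : Fin n, a i * b (k - i)) = 1 := hcall k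
      rw [h1]; exact one_ne_zero
    obtain ⟨i, _, hi⟩ := Finset.exists_ne_zero_of_sum_ne_zero hne
    exact ⟨i, mul_ne_zero_iff.mp hi⟩
  choose f hf1 hf2 using hterm
  have hcard := Finset.card_le_card_of_injOn
    (f := fun k : Fin n => (f k, k - f k))
    (s := (Finset.univ : Finset (Fin n)))
    (t := (Finset.univ.filter fun i => a i ≠ 0) ×ˢ (Finset.univ.filter fun i => b i ≠ 0))
    (by
      intro k _
      simp only [Finset.mem_coe, Finset.mem_product, Finset.mem_filter, Finset.mem_univ, true_and]
      exact ⟨hf1 k, hf2 k⟩)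
    (by
      intro k _ k' _ h
      obtain ⟨e1, e2⟩ := Prod.mk.inj h
      calc k = (k - f k) + f k := (sub_add_cancel k (f k)).symm
        _ = (k' - f k') + f k' := by rw [e2, e1]
        _ = k' := sub_add_cancel k' (f k'))
  rw [Finset.card_product, Finset.card_univ, Fintype.card_fin] at hcard
  have : wt b = d₀ := by rw [hwtb, had]
  calc n ≤ wt a * wt b := hcard
    _ = d₀ ^ 2 := by rw [this, had, sq]
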